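/- For every k ≥ 1 and n ≥ 0, Σ_{m=0}^{k-1} ((p+m)/((p-1)(n+1)+m+1)) · Π_{l=m+1}^{n+m} ((p-1)(n+1)+l) = (1/(n+1)) · (k/((p-1)(n+1)+k)) · Π_{l=k}^{n+k} ((p-1)(n+1)+l). -/

import Mathlib

/-- p-ary bracketings: terms over one variable `x` with one p-ary operation symbol `ω`. -/
inductive Brack (p : ℕ) : Type
  | x : Brack p
  | node : (Fin p → Brack p) → Brack p

namespace Brack

/-- occurrence number: number of occurrences of ω -/
def occ {p : ℕ} : Brack p → ℕ
  | .x => 0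
  | .node f => 1 + ∑ i, occ (f i)

/-- length: number of occurrences of x -/
def len {p : ℕ} : Brack p → ℕ
  | .x => 1
  | .node f => ∑ i, len (f i)

/-- evaluation of a bracketing in a groupoid, variables enumerated left-to-right
starting at position `j`. -/
def evalFrom {p : ℕ} {A : Type*} (op : (Fin p → A) → A) (v : ℕ → A) :
    Brack p → ℕ → A
  | .x, j => v j
  | .node f, j =>
      op (fun i => evalFrom op v (f i)
        (j + ∑ k ∈ Finset.univ.filter (· < i), len (f k)))

/-- the term function induced by a bracketing -/
def eval {p : ℕ} {A : Type*} (op : (Fin p → A) → A) (t : Brack p) (v : ℕ → A) : A :=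
  evalFrom op v t 0

/-- prefix word of a bracketing: `true` codes ω, `false` codes x -/
def word {p : ℕ} : Brack p → List Bool
  | .x => [false]
  | .node f => true :: (List.ofFn (fun i => word (f i))).flatten

/-- auxiliary: scan a word, recording 1 + number of x's before each ω -/
def STaux : List Bool → ℕ → List ℕ
  | [], _ => []
  | true :: w, c => (c + 1) :: STaux w c
  | false :: w, c => STaux w (c + 1)

/-- insertion tuple of a bracketing: the i-th entry is one plus the number
of x's preceding the i-th occurrence of ω in the prefix notation -/
def ST {p : ℕ} (t : Brack p) : List ℕ := STaux (word t) 0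

/-- replace the i-th (0-based) occurrence of x in `t` by `s` -/
def replaceLeaf {p : ℕ} : Brack p → ℕ → Brack p → Brack p
  | .x, i, s => if i = 0 then s else .x
  | .node f, i, s => .node (fun j =>
      let off := ∑ k ∈ Finset.univ.filter (· < j), len (f k)
      if off ≤ i ∧ i < off + len (f j) then replaceLeaf (f j) (i - off) s else f j)

/-- β_i : insertion of ω x … x at the i-th (1-based) occurrence of x -/
def beta {p : ℕ} (i : ℕ) (t : Brack p) : Brack p :=
  replaceLeaf t (i - 1) (.node (fun _ => .x))

/-- left depth: depth of leftmost leaf (binary case) -/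
def dl : Brack 2 → ℕ
  | .x => 0
  | .node f => dl (f 0) + 1

/-- right depth: depth of rightmost leaf (binary case) -/
def dr : Brack 2 → ℕ
  | .x => 0
  | .node f => dr (f 1) + 1

/-- left factor of a binary bracketing -/
def leftF : Brack 2 → Brack 2
  | .x => .x
  | .node f => f 0

/-- whether a bracketing is the single variable x -/
def isX {p : ℕ} : Brack p → Bool
  | .x => true
  | .node _ => false

/-- number of pairs of eggs, i.e. subterm occurrences of ω x x (binary case) -/
def eggs : Brack 2 → ℕ
  | .x => 0
  | .node f => (if isX (f 0) && isX (f 1) then 1 else 0) + eggs (f 0) + eggs (f 1)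

end Brack

/-- generalized Catalan numbers -/
def genCat (p : ℕ) : ℕ → ℕ
  | 0 => 1
  | n + 1 =>
      ∑ v ∈ (Finset.Nat.antidiagonalTuple p n).attach, ∏ k : Fin p, genCat p (v.1 k)
  decreasing_by
    have hv := Finset.Nat.mem_antidiagonalTuple.mp v.2
    have hle : v.1 k ≤ n := by
      calc v.1 k ≤ ∑ i, v.1 i :=
            Finset.single_le_sum (fun i _ => Nat.zero_le _) (Finset.mem_univ k)
        _ = n := hv
    omega

/-- the set M(n,k,p) of weakly increasing n-tuples of positive integers
with u_i ≤ (p-1)(i-1)+k (here indices are 0-based) -/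
def Mset (n k p : ℕ) : Set (Fin n → ℕ) :=
  {u | (∀ i : Fin n, 1 ≤ u i ∧ u i ≤ (p - 1) * (i : ℕ) + k) ∧
    ∀ i j : Fin n, i ≤ j → u i ≤ u j}

theorem stmt_6 (p : ℕ) (hp : 2 ≤ p) (k n : ℕ) (hk : 1 ≤ k) :
    ∑ m ∈ Finset.range k,
        (((p : ℚ) + m) / (((p : ℚ) - 1) * (n + 1) + m + 1)) *
          ∏ l ∈ Finset.Icc (m + 1) (n + m), (((p : ℚ) - 1) * (n + 1) + l) =
      (1 / ((n : ℚ) + 1)) * ((k : ℚ) / (((p : ℚ) - 1) * (n + 1) + k)) *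
        ∏ l ∈ Finset.Icc k (n + k), (((p : ℚ) - 1) * (n + 1) + l) := by
  have hp' : (2:ℚ) ≤ (p:ℚ) := by exact_mod_cast hp
  have hc : (0:ℚ) < ((p:ℚ) - 1) * (n + 1) := by
    apply mul_pos <;> [linarith; positivity]
  induction k, hk using Nat.le_induction with
  | base =>
    have h2 : ∏ l ∈ Finset.Icc 1 (n + 1), (((p : ℚ) - 1) * (n + 1) + l) =
        (∏ l ∈ Finset.Icc 1 n, (((p : ℚ) - 1) * (n + 1) + l)) *
          (((p : ℚ) - 1) * (n + 1) + ((n:ℚ) + 1)) := by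
      rw [Finset.prod_Icc_succ_top (by omega : 1 ≤ n + 1)]
      push_cast; ring_nf
    simp only [Finset.range_one, Finset.sum_singleton, Nat.cast_zero, Nat.cast_one,
      zero_add, h2]
    have h3 : ((p:ℚ) - 1) * (n + 1) + 1 ≠ 0 := by positivity
    have h4 : ((n:ℚ) + 1) ≠ 0 := by positivity
    field_simp
    ring
  | succ k hk ih =>
    have h1 : ∏ l ∈ Finset.Icc k (n + k), (((p : ℚ) - 1) * (n + 1) + l) =
        (((p : ℚ) - 1) * (n + 1) + k) *
          ∏ l ∈ Finset.Icc (k + 1) (n + k), (((p : ℚ) - 1) * (n + 1) + l) := by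
      rw [show Finset.Icc k (n + k) = Finset.Ico k (n + k + 1) by
            rw [Nat.Icc_eq_range', Nat.Ico_eq_range'],
          Finset.prod_eq_prod_Ico_succ_bot (by omega : k < n + k + 1),
          show Finset.Ico (k + 1) (n + k + 1) = Finset.Icc (k + 1) (n + k) by
            rw [Nat.Icc_eq_range', Nat.Ico_eq_range']]
    have h2 : ∏ l ∈ Finset.Icc (k + 1) (n + (k + 1)), (((p : ℚ) - 1) * (n + 1) + l) =
        (∏ l ∈ Finset.Icc (k + 1) (n + k), (((p : ℚ) - 1) * (n + 1) + l)) *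
          (((p : ℚ) - 1) * (n + 1) + ((n:ℚ) + (k:ℚ) + 1)) := by
      rw [show n + (k + 1) = (n + k) + 1 by omega,
          Finset.prod_Icc_succ_top (by omega : k + 1 ≤ n + k + 1)]
      push_cast; ring_nf
    rw [Finset.sum_range_succ, ih, h1, h2]
    have hk' : (1:ℚ) ≤ (k:ℚ) := by exact_mod_cast hk
    have h3 : ((p:ℚ) - 1) * (n + 1) + k ≠ 0 := by positivity
    have h4 : ((n:ℚ) + 1) ≠ 0 := by positivity
    have h5 : ((p:ℚ) - 1) * (n + 1) + (k:ℚ) + 1 ≠ 0 := by positivity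
    have h6 : ((p:ℚ) - 1) * (n + 1) + ((k:ℚ) + 1) ≠ 0 := by positivity
    push_cast
    field_simp
    have h7 : ((n:ℚ) + 1) * ((p:ℚ) - 1) + k ≠ 0 := by rw [mul_comm]; exact h3
    have h8 : ((n:ℚ) + 1) * ((p:ℚ) - 1) + k + 1 ≠ 0 := by rw [mul_comm]; exact h5
    have h9 : ((n:ℚ) + 1) * ((p:ℚ) - 1) + (k + 1) ≠ 0 := by rw [mul_comm]; exact h6
    field_simp
    ring
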